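/- Every 2-connected complete multipartite graph containing a triangle has a dominating cycle. -/

import Mathlib

open SimpleGraph

variable {V : Type*} [Fintype V] [DecidableEq V]

/-- `p 0, p 1, ..., p (n-1)` is a path of order `n` in `G`. -/
def IsPathOn (G : SimpleGraph V) (n : ℕ) (p : ℕ → V) : Prop :=
  (∀ i j, i < n → j < n → p i = p j → i = j) ∧
  (∀ i, i + 1 < n → G.Adj (p i) (p (i + 1)))

/-- An induced path of order `n` in `G`. -/
def IsInducedPathOn (G : SimpleGraph V) (n : ℕ) (p : ℕ → V) : Prop :=
  IsPathOn G n p ∧ ∀ i j, i < n → j < n → G.Adj (p i) (p j) → (i + 1 = j ∨ j + 1 = i)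

/-- `G` contains no induced path on 5 vertices. -/
def P5Free (G : SimpleGraph V) : Prop := ¬ ∃ p : ℕ → V, IsInducedPathOn G 5 p

/-- `G` contains no induced `K₄` minus an edge. -/
def K4mFree (G : SimpleGraph V) : Prop :=
  ¬ ∃ a b c d : V, a ≠ b ∧ a ≠ c ∧ a ≠ d ∧ b ≠ c ∧ b ≠ d ∧ c ≠ d ∧
    G.Adj a b ∧ G.Adj a c ∧ G.Adj a d ∧ G.Adj b c ∧ G.Adj b d ∧ ¬ G.Adj c d

/-- `G` contains no induced `W*` (two triangles `abc`, `def` joined by the edge `cd`). -/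
def WStarFree (G : SimpleGraph V) : Prop :=
  ¬ ∃ a b c d e f : V, List.Nodup [a, b, c, d, e, f] ∧
    G.Adj a b ∧ G.Adj b c ∧ G.Adj a c ∧ G.Adj d e ∧ G.Adj e f ∧ G.Adj d f ∧ G.Adj c d ∧
    ¬ G.Adj a d ∧ ¬ G.Adj a e ∧ ¬ G.Adj a f ∧
    ¬ G.Adj b d ∧ ¬ G.Adj b e ∧ ¬ G.Adj b f ∧ ¬ G.Adj c e ∧ ¬ G.Adj c f

/-- `G` contains no induced paw (triangle `abc` with pendant edge `cd`). -/
def Z1Free (G : SimpleGraph V) : Prop :=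
  ¬ ∃ a b c d : V, List.Nodup [a, b, c, d] ∧
    G.Adj a b ∧ G.Adj b c ∧ G.Adj a c ∧ G.Adj c d ∧ ¬ G.Adj a d ∧ ¬ G.Adj b d

/-- An (oriented) cycle of length `n` in `G`, as an injective map `ZMod n → V`
with consecutive vertices adjacent. -/
def IsCycleOn (G : SimpleGraph V) (n : ℕ) (c : ZMod n → V) : Prop :=
  3 ≤ n ∧ Function.Injective c ∧ ∀ i, G.Adj (c i) (c (i + 1))

/-- A longest cycle of `G`. -/
def IsLongestCycle (G : SimpleGraph V) (n : ℕ) (c : ZMod n → V) : Prop :=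
  IsCycleOn G n c ∧ ∀ (m : ℕ) (d : ZMod m → V), IsCycleOn G m d → m ≤ n

/-- A dominating cycle: every edge of `G` is incident with a vertex of the cycle. -/
def DominatingCycle (G : SimpleGraph V) (n : ℕ) (c : ZMod n → V) : Prop :=
  IsCycleOn G n c ∧ ∀ u v : V, G.Adj u v → u ∈ Set.range c ∨ v ∈ Set.range c

/-- `H` is (the vertex set of) a connected component of `G - R`. -/
def IsCompOff (G : SimpleGraph V) (R : Set V) (H : Set V) : Prop :=
  H.Nonempty ∧ Disjoint H R ∧ (G.induce H).Connected ∧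
  ∀ u v : V, u ∈ H → v ∉ H → v ∉ R → ¬ G.Adj u v

/-- `μ`: the maximum order of a component of `G - R`. -/
noncomputable def muC (G : SimpleGraph V) (R : Set V) : ℕ :=
  sSup {k | ∃ H : Set V, IsCompOff G R H ∧ H.ncard = k}

/-- `ω`: the number of components of `G - R` of maximum order. -/
noncomputable def omegaC (G : SimpleGraph V) (R : Set V) : ℕ :=
  {H : Set V | IsCompOff G R H ∧ H.ncard = muC G R}.ncard

/-- `G` is 2-connected: at least 3 vertices, connected, and removing any
vertex leaves it connected. -/
def TwoConnected (G : SimpleGraph V) : Prop :=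
  3 ≤ Fintype.card V ∧ G.Connected ∧
  ∀ v : V, (G.induce ({v}ᶜ : Set V)).Connected

/-- The set of indices of `ZMod n` encountered going from `s` to `t` in the
positive direction (including both `s` and `t`). -/
def seg (n : ℕ) (s t : ZMod n) : Set (ZMod n) :=
  {x | ∃ k : ℕ, x = s + (k : ZMod n) ∧ ∀ m : ℕ, m < k → s + (m : ZMod n) ≠ t}

/-- `G` is complete multipartite: the vertices partition into classes of an
equivalence relation which are independent, with all edges between classes. -/
def CompleteMultipartite (G : SimpleGraph V) : Prop :=
  ∃ r : V → V → Prop, Equivalence r ∧ ∀ u v : V, u ≠ v → (G.Adj u v ↔ ¬ r u v)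

/-- A `C`-path (for `R = V(C)`): a path of order at least 2 whose ends lie in
`R` and whose internal vertices avoid `R`. -/
def IsCPath (G : SimpleGraph V) (R : Set V) (m : ℕ) (p : ℕ → V) : Prop :=
  2 ≤ m ∧ IsPathOn G m p ∧ p 0 ∈ R ∧ p (m - 1) ∈ R ∧
  ∀ i, 0 < i → i < m - 1 → p i ∉ R

lemma cycle_of_seq (G : SimpleGraph V) (N : ℕ) (f : ℕ → V) (hN : 3 ≤ N)
    (hinj : ∀ i j, i < N → j < N → f i = f j → i = j)
    (hP2 : ∀ i j, i < j → j < N → ¬ G.Adj (f i) (f j) →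
        (j - i + 1 < (N+1)/2 ∨ (j - i + 1 = (N+1)/2 ∧ N % 2 = 0 ∧ i = 0))) :
    ∃ c : ZMod N → V, IsCycleOn G N c ∧ ∀ i, i < N → f i ∈ Set.range c := by
  set h : ℕ := (N+1)/2 with hh
  set σ : ℕ → ℕ := fun j => if j % 2 = 0 then j / 2 else h + j / 2 with hσ
  have hσlt : ∀ j, j < N → σ j < N := by
    intro j hj; simp only [hσ]; split <;> omega
  have hσinj : ∀ u v, u < N → v < N → σ u = σ v → u = v := by
    intro u v hu hv; simp only [hσ]; split <;> split <;> omega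
  haveI : NeZero N := ⟨by omega⟩
  have hadj : ∀ p q, p < q → q < N → ¬ (q - p + 1 < h) →
      ¬ (q - p + 1 = h ∧ N % 2 = 0 ∧ p = 0) → G.Adj (f p) (f q) := by
    intro p q hpq hq hc1 hc2
    by_contra hA
    rcases hP2 p q hpq hq hA with h1 | h2
    · exact hc1 h1
    · exact hc2 h2
  refine ⟨fun i => f (σ i.val), ⟨hN, ?_, ?_⟩, ?_⟩
  · intro i j hij
    have h1 := hinj _ _ (hσlt _ (ZMod.val_lt i)) (hσlt _ (ZMod.val_lt j)) hij
    have h2 := hσinj _ _ (ZMod.val_lt i) (ZMod.val_lt j) h1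
    exact ZMod.val_injective N h2
  · intro i
    have hvi : i.val < N := ZMod.val_lt i
    have hone : (1 : ZMod N).val = 1 := by
      haveI : Fact (1 < N) := ⟨by omega⟩; exact ZMod.val_one N
    have hv1 : (i+1).val = (i.val + 1) % N := by rw [ZMod.val_add, hone]
    show G.Adj (f (σ i.val)) (f (σ (i+1).val))
    set v := i.val with hv
    by_cases hlast : v + 1 < N
    · have hv1' : (i+1).val = v + 1 := by rw [hv1, Nat.mod_eq_of_lt hlast]
      rw [hv1']
      by_cases hpar : v % 2 = 0
      · have e1 : σ v = v / 2 := by simp only [hσ]; rw [if_pos hpar]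
        have e2 : σ (v+1) = h + v / 2 := by
          simp only [hσ]; rw [if_neg (by omega)]; omega
        rw [e1, e2]
        have hq : h + v/2 < N := by
          have := hσlt (v+1) hlast; rwa [e2] at this
        exact hadj (v/2) (h + v/2) (by omega) hq (by omega)
          (by rintro ⟨e, _, _⟩; omega)
      · have e1 : σ v = h + v / 2 := by simp only [hσ]; rw [if_neg hpar]
        have e2 : σ (v+1) = v/2 + 1 := by
          simp only [hσ]; rw [if_pos (by omega)]; omega
        rw [e1, e2]
        have hq : h + v/2 < N := by
          have := hσlt v (by omega); rwa [e1] at this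
        exact (hadj (v/2 + 1) (h + v/2) (by omega) hq (by omega)
          (by rintro ⟨_, _, e⟩; omega)).symm
    · have hvN : v + 1 = N := by omega
      have hv1' : (i+1).val = 0 := by rw [hv1, hvN, Nat.mod_self]
      rw [hv1']
      have e0 : σ 0 = 0 := by simp [hσ]
      rw [e0]
      by_cases hpar : N % 2 = 0
      · have e1 : σ v = N - 1 := by simp only [hσ]; split <;> omega
        rw [e1]
        exact (hadj 0 (N-1) (by omega) (by omega) (by omega)
          (by rintro ⟨e, _, _⟩; omega)).symm
      · have e1 : σ v = h - 1 := by simp only [hσ]; split <;> omega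
        rw [e1]
        exact (hadj 0 (h-1) (by omega) (by omega) (by omega)
          (by rintro ⟨_, e, _⟩; omega)).symm
  · intro p hp
    by_cases hph : p < h
    · refine ⟨((2*p : ℕ) : ZMod N), ?_⟩
      show f (σ (ZMod.val ((2*p : ℕ) : ZMod N))) = f p
      rw [ZMod.val_natCast, Nat.mod_eq_of_lt (by omega)]
      have e : σ (2*p) = p := by simp only [hσ]; rw [if_pos (by omega)]; omega
      rw [e]
    · refine ⟨((2*(p-h)+1 : ℕ) : ZMod N), ?_⟩
      show f (σ (ZMod.val ((2*(p-h)+1 : ℕ) : ZMod N))) = f p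
      rw [ZMod.val_natCast, Nat.mod_eq_of_lt (by omega)]
      have e : σ (2*(p-h)+1) = p := by
        simp only [hσ]; rw [if_neg (by omega)]; omega
      rw [e]

theorem stmt_10 (G : SimpleGraph V) (h2 : TwoConnected G)
    (hm : CompleteMultipartite G)
    (ht : ∃ a b c : V, G.Adj a b ∧ G.Adj b c ∧ G.Adj a c) :
    ∃ (n : ℕ) (c : ZMod n → V), DominatingCycle G n c := by
  classical
  obtain ⟨r, hr, hmp⟩ := hm
  obtain ⟨a, b, c0, hab, hbc, hac⟩ := ht
  have hnr : ∀ u v : V, G.Adj u v → ¬ r u v := fun u v huv => (hmp u v huv.ne).mp huv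
  have hradj : ∀ u v : V, u ≠ v → ¬ r u v → G.Adj u v := fun u v hne h => (hmp u v hne).mpr h
  set cls : V → Finset V := fun v => Finset.univ.filter (fun u => r v u) with hclsdef
  obtain ⟨v₀, -, hmax⟩ := Finset.exists_max_image Finset.univ (fun v => (cls v).card)
    ⟨a, Finset.mem_univ a⟩
  set P := cls v₀ with hPdef
  set O := Finset.univ \ P with hOdef
  have hPmem : ∀ u, u ∈ P ↔ r v₀ u := by
    intro u; rw [hPdef, hclsdef]; simp
  have hPtrans : ∀ u v, u ∈ P → v ∈ P → r u v := fun u v hu hv =>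
    hr.trans (hr.symm ((hPmem u).mp hu)) ((hPmem v).mp hv)
  have hOmem : ∀ u, u ∈ O ↔ u ∉ P := by intro u; rw [hOdef]; simp
  -- two triangle vertices outside P
  have nab := hnr _ _ hab; have nbc := hnr _ _ hbc; have nac := hnr _ _ hac
  obtain ⟨b', c', hbO, hcO, hbc'⟩ : ∃ b' c', b' ∈ O ∧ c' ∈ O ∧ ¬ r b' c' := by
    by_cases ha : a ∈ P
    · exact ⟨b, c0, (hOmem b).mpr (fun h => nab (hPtrans _ _ ha h)),
        (hOmem c0).mpr (fun h => nac (hPtrans _ _ ha h)), nbc⟩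
    · by_cases hb : b ∈ P
      · exact ⟨a, c0, (hOmem a).mpr ha,
          (hOmem c0).mpr (fun h => nbc (hPtrans _ _ hb h)), nac⟩
      · exact ⟨a, b, (hOmem a).mpr ha, (hOmem b).mpr hb, nab⟩
  have hbc'ne : b' ≠ c' := fun h => hbc' (h ▸ hr.refl b')
  have hs2 : 2 ≤ O.card := Finset.one_lt_card.mpr ⟨b', hbO, c', hcO, hbc'ne⟩
  have hn1 : 1 ≤ P.card := Finset.card_pos.mpr ⟨v₀, (hPmem v₀).mpr (hr.refl v₀)⟩
  set t := min P.card O.card with htdef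
  obtain ⟨T, hTP, hTcard⟩ := Finset.exists_subset_card_eq (Nat.min_le_left P.card O.card)
  set S := T ∪ O with hSdef
  have hdisj : Disjoint T O := by
    rw [Finset.disjoint_left]
    intro x hxT hxO
    exact ((hOmem x).mp hxO) (hTP hxT)
  have hNeq : S.card = t + O.card := by
    rw [hSdef, Finset.card_union_of_disjoint hdisj, hTcard]
  set N := S.card with hNdef
  have hts : t ≤ O.card := Nat.min_le_right _ _
  have ht1 : 1 ≤ t := le_min hn1 (by omega)
  have hN3 : 3 ≤ N := by omega
  set clS : V → Finset V := fun v => S.filter (fun u => r v u) with hclSdef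
  have hclSmem : ∀ v u, u ∈ clS v ↔ u ∈ S ∧ r v u := by
    intro v u; rw [hclSdef]; simp
  have hSP : ∀ u, u ∈ S → u ∈ P → u ∈ T := by
    intro u hu hP'
    rcases Finset.mem_union.mp hu with h | h
    · exact h
    · exact absurd hP' ((hOmem u).mp h)
  have hTS : ∀ u, u ∈ T → u ∈ S := fun u hu => Finset.mem_union_left _ hu
  have hclsT : ∀ v, v ∈ T → clS v = T := by
    intro v hv
    ext u
    rw [hclSmem]
    constructor
    · rintro ⟨huS, hru⟩
      exact hSP u huS ((hPmem u).mpr (hr.trans ((hPmem v).mp (hTP hv)) hru))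
    · intro huT
      exact ⟨hTS u huT, hPtrans v u (hTP hv) (hTP huT)⟩
  have hclsO : ∀ v, v ∈ O → clS v ⊆ O := by
    intro v hv u hu
    rw [hclSmem] at hu
    rw [hOmem]
    intro huP
    exact ((hOmem v).mp hv) ((hPmem v).mpr (hr.trans ((hPmem u).mp huP) (hr.symm hu.2)))
  have hcard_le_t : ∀ v, v ∈ S → (clS v).card ≤ t := by
    intro v hv
    rcases Finset.mem_union.mp hv with h | h
    · rw [hclsT v h, hTcard]
    · have h1 : (clS v).card ≤ O.card := Finset.card_le_card (hclsO v h)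
      have h2 : (clS v).card ≤ P.card := by
        refine le_trans (Finset.card_le_card ?_) (hmax v (Finset.mem_univ v))
        intro u hu
        rw [hclSmem] at hu
        rw [hclsdef]; simp [hu.2]
      omega
  have hcard_lt : ∀ v, v ∈ S → v ∉ T → (clS v).card < O.card := by
    intro v hv hvT
    have hvO : v ∈ O := by rcases Finset.mem_union.mp hv with h | h; exact absurd h hvT; exact h
    have hmiss : b' ∉ clS v ∨ c' ∉ clS v := by
      by_contra hcon
      push_neg at hcon
      exact hbc' (hr.trans (hr.symm ((hclSmem v b').mp hcon.1).2) ((hclSmem v c').mp hcon.2).2)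
    rcases hmiss with h | h
    · calc (clS v).card ≤ (O.erase b').card :=
            Finset.card_le_card (fun u hu => Finset.mem_erase.mpr
              ⟨fun he => h (he ▸ hu), hclsO v hvO hu⟩)
        _ < O.card := by rw [Finset.card_erase_of_mem hbO]; omega
    · calc (clS v).card ≤ (O.erase c').card :=
            Finset.card_le_card (fun u hu => Finset.mem_erase.mpr
              ⟨fun he => h (he ▸ hu), hclsO v hvO hu⟩)
        _ < O.card := by rw [Finset.card_erase_of_mem hcO]; omega
  -- key function machinery
  set M := Fintype.card V with hMdef
  set ι : V → ℕ := fun v => ((Fintype.equivFin V) v : ℕ) with hιdef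
  have hιinj : Function.Injective ι := fun x y h =>
    (Fintype.equivFin V).injective (Fin.val_injective h)
  have hιlt : ∀ v, ι v < M := fun v => (Fintype.equivFin V v).isLt
  set rep : Finset V → ℕ :=
    fun A => if h : A.Nonempty then (A.image ι).min' (h.image ι) else 0 with hrepdef
  set key : V → ℕ := fun v => (N - (clS v).card) * (M+1) + rep (clS v) with hkeydef
  have hclSne : ∀ v, v ∈ S → (clS v).Nonempty :=
    fun v hv => ⟨v, (hclSmem v v).mpr ⟨hv, hr.refl v⟩⟩
  have hrepw : ∀ v, (clS v).Nonempty → ∃ w ∈ clS v, rep (clS v) = ι w := by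
    intro v hv
    have hmem : rep (clS v) ∈ (clS v).image ι := by
      rw [hrepdef]; dsimp only; rw [dif_pos hv]; exact Finset.min'_mem _ _
    obtain ⟨w, hw, hwe⟩ := Finset.mem_image.mp hmem
    exact ⟨w, hw, hwe.symm⟩
  have hcardN : ∀ v, (clS v).card ≤ N := fun v =>
    Finset.card_le_card (Finset.filter_subset _ _)
  have hclseq : ∀ u v, u ∈ S → v ∈ S → r u v → clS u = clS v := by
    intro u v hu hv hruv
    ext w
    rw [hclSmem, hclSmem]
    exact ⟨fun ⟨h1, h2⟩ => ⟨h1, hr.trans (hr.symm hruv) h2⟩,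
      fun ⟨h1, h2⟩ => ⟨h1, hr.trans hruv h2⟩⟩
  have hkeycong : ∀ u v, u ∈ S → v ∈ S → r u v → key u = key v := by
    intro u v hu hv hruv
    rw [hkeydef]; dsimp only; rw [hclseq u v hu hv hruv]
  have hmodkey : ∀ v, v ∈ S → key v % (M+1) = rep (clS v) := by
    intro v hv
    obtain ⟨w, hw, hwe⟩ := hrepw v (hclSne v hv)
    rw [hkeydef]; dsimp only
    rw [Nat.add_comm, Nat.add_mul_mod_self_right, hwe,
      Nat.mod_eq_of_lt (by have := hιlt w; omega)]
  have hkey_r : ∀ u v, u ∈ S → v ∈ S → key u = key v → r u v := by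
    intro u v hu hv hkuv
    have h1 : rep (clS u) = rep (clS v) := by
      rw [← hmodkey u hu, ← hmodkey v hv, hkuv]
    obtain ⟨wu, hwu, hweu⟩ := hrepw u (hclSne u hu)
    obtain ⟨wv, hwv, hwev⟩ := hrepw v (hclSne v hv)
    have : wu = wv := hιinj (by rw [← hweu, ← hwev, h1])
    subst this
    exact hr.trans ((hclSmem u wu).mp hwu).2 (hr.symm ((hclSmem v wu).mp hwv).2)
  have hkey_card : ∀ u v, u ∈ S → v ∈ S → key u ≤ key v → (clS v).card ≤ (clS u).card := by
    intro u v hu hv hle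
    by_contra hlt
    push_neg at hlt
    obtain ⟨wv, hwv, hwev⟩ := hrepw v (hclSne v hv)
    have hltv : rep (clS v) < M + 1 := by rw [hwev]; have := hιlt wv; omega
    have h1 : (N - (clS v).card) + 1 ≤ N - (clS u).card := by
      have := hcardN u; have := hcardN v; omega
    have h2 : key v < key u := by
      rw [hkeydef]; dsimp only
      calc (N - (clS v).card) * (M+1) + rep (clS v)
          < (N - (clS v).card) * (M+1) + (M+1) := Nat.add_lt_add_left hltv _
        _ = ((N - (clS v).card) + 1) * (M+1) := by ring
        _ ≤ (N - (clS u).card) * (M+1) := Nat.mul_le_mul_right _ h1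
        _ ≤ (N - (clS u).card) * (M+1) + rep (clS u) := Nat.le_add_right _ _
    omega
  -- sorted list
  set L : List V := S.toList.mergeSort (fun u v => decide (key u ≤ key v)) with hLdef
  have hperm : L.Perm S.toList := List.mergeSort_perm _ _
  have hmemL : ∀ x, x ∈ L ↔ x ∈ S := fun x => by rw [hperm.mem_iff, Finset.mem_toList]
  have hnd : L.Nodup := hperm.nodup_iff.mpr S.nodup_toList
  have hlen : L.length = N := by rw [hperm.length_eq, Finset.length_toList]
  have hsorted : L.Pairwise (fun u v => key u ≤ key v) := by
    have h := List.pairwise_mergeSort (le := fun u v => decide (key u ≤ key v))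
      (by intro x y z; simp only [decide_eq_true_eq]; omega)
      (by intro x y; simp only [Bool.or_eq_true, decide_eq_true_eq]; exact Nat.le_total _ _)
      S.toList
    exact h.imp (by simp only [decide_eq_true_eq]; exact fun h => h)
  set f : ℕ → V := fun i => L.getD i a with hfdef
  have hfget : ∀ i, (h : i < N) → f i = L[i]'(by omega) := by
    intro i h
    rw [hfdef]; dsimp only
    exact List.getD_eq_getElem L a (by omega)
  have hfS : ∀ i, i < N → f i ∈ S := by
    intro i h
    rw [hfget i h]
    exact (hmemL _).mp (List.getElem_mem _)
  have hfinj : ∀ i j, i < N → j < N → f i = f j → i = j := by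
    intro i j hi hj he
    rw [hfget i hi, hfget j hj] at he
    exact (List.Nodup.getElem_inj_iff hnd).mp he
  have hkey_mono : ∀ i j, i ≤ j → j < N → key (f i) ≤ key (f j) := by
    intro i j hij hj
    rcases Nat.eq_or_lt_of_le hij with h | h
    · rw [h]
    · rw [hfget i (by omega), hfget j hj]
      exact List.pairwise_iff_getElem.mp hsorted i j _ _ h
  have hcontig : ∀ i k j, i ≤ k → k ≤ j → j < N → r (f i) (f j) → r (f i) (f k) := by
    intro i k j hik hkj hj hrij
    have hkeq : key (f i) = key (f j) :=
      hkeycong _ _ (hfS i (by omega)) (hfS j hj) hrij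
    have h1 := hkey_mono i k hik (by omega)
    have h2 := hkey_mono k j hkj hj
    exact hkey_r _ _ (hfS i (by omega)) (hfS k (by omega)) (by omega)
  have hIccT : ∀ i k j, i ≤ k → k ≤ j → j < N → r (f i) (f j) → f k ∈ clS (f i) := by
    intro i k j hik hkj hj hrij
    exact (hclSmem _ _).mpr ⟨hfS k (by omega), hcontig i k j hik hkj hj hrij⟩
  have hcount : ∀ i j, i ≤ j → j < N → r (f i) (f j) → j + 1 - i ≤ (clS (f i)).card := by
    intro i j hij hj hrij
    have h := Finset.card_le_card_of_injOn (s := Finset.Icc i j) (t := clS (f i)) f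
      (fun k hk => by
        rw [Finset.mem_coe, Finset.mem_Icc] at hk
        exact hIccT i k j hk.1 hk.2 hj hrij)
      (fun k1 h1 k2 h2 he => by
        simp only [Finset.coe_Icc, Set.mem_Icc] at h1 h2
        exact hfinj k1 k2 (by omega) (by omega) he)
    rwa [Nat.card_Icc] at h
  have hP2 : ∀ i j, i < j → j < N → ¬ G.Adj (f i) (f j) →
      (j - i + 1 < (N+1)/2 ∨ (j - i + 1 = (N+1)/2 ∧ N % 2 = 0 ∧ i = 0)) := by
    intro i j hij hj hA
    have hne : f i ≠ f j := fun he => by have := hfinj i j (by omega) hj he; omega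
    have hrij : r (f i) (f j) := by
      by_contra hnrij
      exact hA (hradj _ _ hne hnrij)
    have hd : j + 1 - i ≤ t :=
      le_trans (hcount i j (by omega) hj hrij) (hcard_le_t _ (hfS i (by omega)))
    by_cases hsmall : j - i + 1 < (N+1)/2
    · exact Or.inl hsmall
    · right
      have hpar : N % 2 = 0 ∧ j - i + 1 = (N+1)/2 ∧ j + 1 - i = t := by omega
      refine ⟨hpar.2.1, hpar.1, ?_⟩
      have hceq : (clS (f i)).card = t :=
        le_antisymm (hcard_le_t _ (hfS i (by omega)))
          (by have := hcount i j (by omega) hj hrij; omega)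
      have hfiT : f i ∈ T := by
        by_contra hTc
        have := hcard_lt (f i) (hfS i (by omega)) hTc
        omega
      have hclT : clS (f i) = T := hclsT _ hfiT
      by_contra hi0
      have h0T : f 0 ∉ T := by
        intro h0T
        obtain ⟨k, hk, he⟩ := Finset.surj_on_of_inj_on_of_card_le
          (s := Finset.Icc i j) (t := T) (fun k _ => f k)
          (fun k hk => by
            rw [Finset.mem_Icc] at hk
            rw [← hclT]
            exact hIccT i k j hk.1 hk.2 hj hrij)
          (fun k1 k2 h1 h2 he => by
            rw [Finset.mem_Icc] at h1 h2
            exact hfinj k1 k2 (by omega) (by omega) he)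
          (by rw [Nat.card_Icc, hTcard]; omega)
          (f 0) h0T
        rw [Finset.mem_Icc] at hk
        have := hfinj 0 k (by omega) (by omega) he
        omega
      have hk0 : key (f 0) ≤ key (f i) := hkey_mono 0 i (by omega) (by omega)
      have hc0 : (clS (f i)).card ≤ (clS (f 0)).card :=
        hkey_card _ _ (hfS 0 (by omega)) (hfS i (by omega)) hk0
      have := hcard_lt (f 0) (hfS 0 (by omega)) h0T
      omega
  obtain ⟨c, hcyc, hrange⟩ := cycle_of_seq G N f hN3 hfinj hP2
  refine ⟨N, c, hcyc, ?_⟩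
  intro u v huv
  by_contra hcon
  push_neg at hcon
  have hSrange : ∀ x, x ∈ S → x ∈ Set.range c := by
    intro x hx
    obtain ⟨k, hk, he⟩ := List.mem_iff_getElem.mp ((hmemL x).mpr hx)
    have hkN : k < N := by omega
    have hfk : f k = x := by rw [hfget k hkN]; exact he
    exact hfk ▸ hrange k hkN
  have huP : u ∈ P := by
    by_contra h
    exact hcon.1 (hSrange u (Finset.mem_union_right _ ((hOmem u).mpr h)))
  have hvP : v ∈ P := by
    by_contra h
    exact hcon.2 (hSrange v (Finset.mem_union_right _ ((hOmem v).mpr h)))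
  exact hnr u v huv (hPtrans u v huP hvP)
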